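/- arXiv:2007.08281 — 4 statements merged into one kernel-verified Lean document; each statement's English description precedes it below -/
import Mathlib

section
/- Let r ≥ 1, let v ∈ ℝ^r be nonzero, let a ∈ ℝ and η ∈ ℝ^r with ⟨η,v⟩ = a, and let ε > 0. Put T' = {η + ζ v + u : ζ ∈ [−ε,ε], u ∈ ℝ^r with ⟨u,v⟩ = 0 and ‖u‖ ≤ ε} and let Ω = {λ ∈ ℂ^r : Re λ ∈ T'} be the corresponding tube. Let φ : Ω → ℂ be continuous on Ω and holomorphic on the interior of Ω, and suppose there are C > 0 and n ∈ ℕ such that |(⟨λ,v⟩ − a) · φ(λ)| ≤ C (1 + ‖λ‖)^n for all λ ∈ Ω. Then |φ(λ)| ≤ ε^{-1} ‖v‖^{-2} C (1 + 2ε‖v‖ + ‖λ‖)^n for all λ ∈ Ω. -/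
noncomputable section

set_option maxHeartbeats 1000000 in
theorem stmt1 (r : ℕ) (hr : 1 ≤ r)
    (v : EuclideanSpace ℝ (Fin r)) (hv : v ≠ 0) (a : ℝ)
    (η : EuclideanSpace ℝ (Fin r)) (hη : ∑ m : Fin r, η m * v m = a)
    (ε : ℝ) (hε : 0 < ε)
    (T' : Set (EuclideanSpace ℝ (Fin r)))
    (hT' : T' = {x | ∃ ζ : ℝ, ∃ u : EuclideanSpace ℝ (Fin r),
        ζ ∈ Set.Icc (-ε) ε ∧ (∑ m : Fin r, u m * v m) = 0 ∧ ‖u‖ ≤ ε ∧ x = η + ζ • v + u})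
    (Ω : Set (EuclideanSpace ℂ (Fin r)))
    (hΩ : Ω = {l | (WithLp.toLp 2 (fun m => (l m).re) : EuclideanSpace ℝ (Fin r)) ∈ T'})
    (φ : EuclideanSpace ℂ (Fin r) → ℂ)
    (hφc : ContinuousOn φ Ω) (hφd : DifferentiableOn ℂ φ (interior Ω))
    (C : ℝ) (hC : 0 < C) (n : ℕ)
    (hbound : ∀ l ∈ Ω, ‖((∑ m : Fin r, l m * (v m : ℂ)) - (a : ℂ)) * φ l‖ ≤ C * (1 + ‖l‖) ^ n) :
    ∀ l ∈ Ω, ‖φ l‖ ≤ ε⁻¹ * (‖v‖ ^ 2)⁻¹ * C * (1 + 2 * ε * ‖v‖ + ‖l‖) ^ n := by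
  have hvn : (0:ℝ) < ‖v‖ := norm_pos_iff.mpr hv
  have hv2 : (0:ℝ) < ‖v‖ ^ 2 := by positivity
  have sumvv : ∑ m, v m * v m = ‖v‖ ^ 2 := by
    rw [EuclideanSpace.norm_eq, Real.sq_sqrt (by positivity)]
    simp [Real.norm_eq_abs, sq_abs, sq]
  obtain ⟨vc, hvc⟩ : ∃ vc : EuclideanSpace ℂ (Fin r), ∀ m, vc m = (v m : ℂ) :=
    ⟨WithLp.toLp 2 (fun m => (v m : ℂ)), fun _ => rfl⟩
  have hnvc : ‖vc‖ = ‖v‖ := by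
    rw [show ‖v‖ = Real.sqrt (∑ i, ‖v i‖ ^ 2) from EuclideanSpace.norm_eq v,
        show ‖vc‖ = Real.sqrt (∑ i, ‖vc i‖ ^ 2) from EuclideanSpace.norm_eq vc]
    simp [hvc]
  -- membership helper (closed conditions)
  have hmemΩ : ∀ (ζ' : ℝ) (u' : EuclideanSpace ℝ (Fin r)) (l : EuclideanSpace ℂ (Fin r)),
      |ζ'| ≤ ε → (∑ m, u' m * v m) = 0 → ‖u'‖ ≤ ε →
      (∀ m, (l m).re = η m + ζ' * v m + u' m) → l ∈ Ω := by
    intro ζ' u' l h1 h2 h3 h4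
    rw [hΩ]
    show (WithLp.toLp 2 (fun m => (l m).re) : EuclideanSpace ℝ (Fin r)) ∈ T'
    rw [hT']
    refine ⟨ζ', u', Set.mem_Icc.mpr ⟨(abs_le.mp h1).1, (abs_le.mp h1).2⟩, h2, h3, ?_⟩
    ext m
    simpa using h4 m
  -- the projection map used for the open set witnessing interior membership
  obtain ⟨P, hP⟩ : ∃ P : EuclideanSpace ℂ (Fin r) → EuclideanSpace ℝ (Fin r),
      ∀ l m, P l m = (l m).re - η m - (((∑ m', (l m').re * v m') - a) / ‖v‖ ^ 2) * v m :=
    ⟨fun l => WithLp.toLp 2 (fun m => (l m).re - η m - (((∑ m', (l m').re * v m') - a) / ‖v‖ ^ 2) * v m),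
      fun _ _ => rfl⟩
  have hc1 : Continuous (fun l : EuclideanSpace ℂ (Fin r) => (∑ m, (l m).re * v m) - a) :=
    (continuous_finset_sum _ fun m _ =>
      (Complex.continuous_re.comp (PiLp.continuous_apply _ _ m)).mul continuous_const).sub
      continuous_const
  have hWopen : IsOpen {l : EuclideanSpace ℂ (Fin r) |
      |(∑ m, (l m).re * v m) - a| < ε * ‖v‖ ^ 2 ∧ ‖P l‖ < ε} := by
    have hc2 : Continuous P := by
      rw [show P = fun l => (WithLp.toLp 2 (fun m => (l m).re - η m
          - (((∑ m', (l m').re * v m') - a) / ‖v‖ ^ 2) * v m) : EuclideanSpace ℝ (Fin r))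
        from funext fun l => PiLp.ext fun m => hP l m]
      refine (PiLp.continuous_toLp 2 _).comp (continuous_pi fun m => ?_)
      exact ((Complex.continuous_re.comp (PiLp.continuous_apply _ _ m)).sub continuous_const).sub
        ((hc1.div_const _).mul continuous_const)
    rw [Set.setOf_and]
    exact (isOpen_lt (continuous_abs.comp hc1) continuous_const).inter
      (isOpen_lt (continuous_norm.comp hc2) continuous_const)
  have hWsub : {l : EuclideanSpace ℂ (Fin r) |
      |(∑ m, (l m).re * v m) - a| < ε * ‖v‖ ^ 2 ∧ ‖P l‖ < ε} ⊆ Ω := by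
    rintro l ⟨h1, h2⟩
    set ζ' : ℝ := ((∑ m', (l m').re * v m') - a) / ‖v‖ ^ 2 with hζ'
    refine hmemΩ ζ' (P l) l ?_ ?_ (le_of_lt h2) ?_
    · rw [hζ', abs_div, abs_of_pos hv2, div_le_iff₀ hv2]
      exact le_of_lt (by linarith [h1])
    · have e1 : ∑ m, P l m * v m
          = (∑ m, (l m).re * v m) - (∑ m, η m * v m) - ζ' * (∑ m, v m * v m) := by
        rw [Finset.mul_sum, ← Finset.sum_sub_distrib, ← Finset.sum_sub_distrib]
        exact Finset.sum_congr rfl fun m _ => by rw [hP l m]; ring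
      rw [e1, hη, sumvv, hζ']
      field_simp
      ring
    · intro m; rw [hP l m]; ring
  have hmemInt : ∀ (ζ' : ℝ) (u' : EuclideanSpace ℝ (Fin r)) (l : EuclideanSpace ℂ (Fin r)),
      |ζ'| < ε → (∑ m, u' m * v m) = 0 → ‖u'‖ < ε →
      (∀ m, (l m).re = η m + ζ' * v m + u' m) → l ∈ interior Ω := by
    intro ζ' u' l h1 h2 h3 h4
    refine interior_maximal hWsub hWopen ?_
    have hsum : (∑ m, (l m).re * v m) - a = ζ' * ‖v‖ ^ 2 := by
      have : ∑ m, (l m).re * v m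
          = (∑ m, η m * v m) + ζ' * (∑ m, v m * v m) + ∑ m, u' m * v m := by
        rw [Finset.mul_sum, ← Finset.sum_add_distrib, ← Finset.sum_add_distrib]
        exact Finset.sum_congr rfl fun m _ => by rw [h4 m]; ring
      rw [this, hη, h2, sumvv]; ring
    constructor
    · rw [hsum, abs_mul, abs_of_pos hv2]
      exact mul_lt_mul_of_pos_right h1 hv2
    · have : P l = u' := by
        ext m
        rw [hP l m, hsum, h4 m]
        field_simp
        ring
      rw [this]; exact h3
  -- main argument
  intro l0 hl0
  have hdec : (WithLp.toLp 2 (fun m => (l0 m).re) : EuclideanSpace ℝ (Fin r)) ∈ T' := by rw [hΩ] at hl0; exact hl0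
  rw [hT'] at hdec
  obtain ⟨ζ, u, hζ, hu0, hun, hx⟩ := hdec
  have hxm : ∀ m, (l0 m).re = η m + ζ * v m + u m := by
    intro m
    have := congrArg (fun x : EuclideanSpace ℝ (Fin r) => x m) hx
    simpa using this
  have hζabs : |ζ| ≤ ε := abs_le.mpr ⟨hζ.1, hζ.2⟩
  set w : ℂ := (∑ m, l0 m * (v m : ℂ)) - a with hw
  have hwre : w.re = ζ * ‖v‖ ^ 2 := by
    rw [hw, Complex.sub_re, Complex.re_sum]
    have : ∑ m, (l0 m * (v m : ℂ)).re
        = (∑ m, η m * v m) + ζ * (∑ m, v m * v m) + ∑ m, u m * v m := by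
      rw [Finset.mul_sum, ← Finset.sum_add_distrib, ← Finset.sum_add_distrib]
      refine Finset.sum_congr rfl fun m _ => ?_
      rw [show (l0 m * (v m : ℂ)).re = (l0 m).re * v m by simp [Complex.mul_re], hxm m]
      ring
    rw [this, hη, hu0, sumvv]
    simp
  have hbound0 := hbound l0 hl0
  rw [← hw] at hbound0
  have hmono : C * (1 + ‖l0‖) ^ n ≤ C * (1 + 2 * ε * ‖v‖ + ‖l0‖) ^ n := by
    refine mul_le_mul_of_nonneg_left (pow_le_pow_left₀ ?_ (by nlinarith) n) hC.le
    positivity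
  by_cases hcase : ε * ‖v‖ ^ 2 ≤ ‖w‖
  · -- easy case : the linear factor is not small
    have hw0 : ‖w‖ > 0 := lt_of_lt_of_le (by positivity) hcase
    rw [norm_mul] at hbound0
    have h2 : (ε * ‖v‖ ^ 2) * ‖φ l0‖ ≤ C * (1 + 2 * ε * ‖v‖ + ‖l0‖) ^ n :=
      le_trans (le_trans (mul_le_mul_of_nonneg_right hcase (norm_nonneg _)) hbound0) hmono
    calc ‖φ l0‖ = (ε * ‖v‖ ^ 2)⁻¹ * ((ε * ‖v‖ ^ 2) * ‖φ l0‖) := by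
          field_simp
      _ ≤ (ε * ‖v‖ ^ 2)⁻¹ * (C * (1 + 2 * ε * ‖v‖ + ‖l0‖) ^ n) :=
          mul_le_mul_of_nonneg_left h2 (by positivity)
      _ = ε⁻¹ * (‖v‖ ^ 2)⁻¹ * C * (1 + 2 * ε * ‖v‖ + ‖l0‖) ^ n := by
          rw [mul_inv]; ring
  · push_neg at hcase
    -- hard case : apply the maximum modulus principle on discs
    set s₀ : ℝ := ‖w‖ / (ε * ‖v‖ ^ 2) with hs₀
    have hs₀0 : 0 ≤ s₀ := by positivity
    have hs₀1 : s₀ < 1 := by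
      rw [hs₀, div_lt_one (by positivity)]; exact hcase
    obtain ⟨cvec, hcvec⟩ : ∃ cvec : EuclideanSpace ℂ (Fin r),
        ∀ m, cvec m = ((ζ * v m + u m : ℝ) : ℂ) :=
      ⟨WithLp.toLp 2 (fun m => ((ζ * v m + u m : ℝ) : ℂ)), fun _ => rfl⟩
    set lam : ℝ → EuclideanSpace ℂ (Fin r) :=
      fun s => l0 - (((1 - s : ℝ)) : ℂ) • cvec with hlam
    have hlamm : ∀ s m, lam s m = l0 m - (((1 - s : ℝ)) : ℂ) * cvec m := by
      intro s m; rw [hlam]; simp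
    have hlamre : ∀ s m, (lam s m).re = η m + (s * ζ) * v m + s * u m := by
      intro s m
      rw [hlamm s m, Complex.sub_re, hcvec m, Complex.re_ofReal_mul, Complex.ofReal_re, hxm m]
      ring
    have hlamim : ∀ s m, (lam s m).im = (l0 m).im := by
      intro s m
      rw [hlamm s m, Complex.sub_im, hcvec m, Complex.mul_im]
      simp
    have hlamsum : ∀ s, (∑ m, lam s m * (v m : ℂ)) - a
        = w - (((1 - s) * ζ * ‖v‖ ^ 2 : ℝ) : ℂ) := by
      intro s
      have h1 : ∑ m, lam s m * (v m : ℂ)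
          = (∑ m, l0 m * (v m : ℂ))
            - (((1 - s : ℝ)) : ℂ) * ∑ m, ((ζ * v m + u m : ℝ) : ℂ) * ((v m : ℝ) : ℂ) := by
        rw [Finset.mul_sum, ← Finset.sum_sub_distrib]
        refine Finset.sum_congr rfl fun m _ => ?_
        rw [hlamm s m, hcvec m]; ring
      have h2 : ∑ m, ((ζ * v m + u m : ℝ) : ℂ) * ((v m : ℝ) : ℂ) = ((ζ * ‖v‖ ^ 2 : ℝ) : ℂ) := by
        have h3 : ∑ m, (ζ * v m + u m) * v m = ζ * ‖v‖ ^ 2 := by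
          have : ∑ m, (ζ * v m + u m) * v m
              = ζ * (∑ m, v m * v m) + ∑ m, u m * v m := by
            rw [Finset.mul_sum, ← Finset.sum_add_distrib]
            exact Finset.sum_congr rfl fun m _ => by ring
          rw [this, hu0, sumvv]; ring
        rw [← h3, Complex.ofReal_sum]
        exact Finset.sum_congr rfl fun m _ => by push_cast; ring
      rw [h1, h2, hw]
      push_cast
      ring
    -- the target bound function of s
    set B : ℝ → ℝ := fun s =>
      (s * ε)⁻¹ * (‖v‖ ^ 2)⁻¹ * C * (1 + 2 * ε * ‖v‖ + ‖lam s‖) ^ n with hB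
    have key : ∀ s ∈ Set.Ioo s₀ 1, ‖φ (lam s)‖ ≤ B s := by
      intro s hs
      have hs0 : 0 < s := lt_of_le_of_lt hs₀0 hs.1
      have hs1 : s < 1 := hs.2
      set ρ : ℝ := s * ε with hρdef
      have hρ : 0 < ρ := by positivity
      set ws : ℂ := w - (((1 - s) * ζ * ‖v‖ ^ 2 : ℝ) : ℂ) with hws
      have hwsre : ws.re = s * ζ * ‖v‖ ^ 2 := by
        rw [hws, Complex.sub_re, Complex.ofReal_re, hwre]; ring
      have hwsim : ws.im = w.im := by rw [hws, Complex.sub_im, Complex.ofReal_im]; ring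
      have hwsle : ‖ws‖ ≤ ‖w‖ := by
        rw [Complex.norm_def, Complex.norm_def]
        refine Real.sqrt_le_sqrt ?_
        rw [Complex.normSq_apply, Complex.normSq_apply, hwsre, hwsim, hwre]
        nlinarith [mul_nonneg (mul_nonneg (sub_nonneg.mpr hs1.le)
          (by linarith : (0:ℝ) ≤ 1 + s)) (sq_nonneg (ζ * ‖v‖ ^ 2))]
      set zc : ℂ := -ws / ((‖v‖ ^ 2 : ℝ) : ℂ) with hzc
      have hv2c : ((‖v‖ ^ 2 : ℝ) : ℂ) ≠ 0 := by
        simpa using ne_of_gt hv2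
      have hzcn : ‖zc‖ < ρ := by
        rw [hzc, norm_div, norm_neg]
        rw [show ‖((‖v‖ ^ 2 : ℝ) : ℂ)‖ = ‖v‖ ^ 2 by
          rw [Complex.norm_real, Real.norm_eq_abs, abs_of_pos hv2]]
        rw [div_lt_iff₀ hv2]
        calc ‖ws‖ ≤ ‖w‖ := hwsle
          _ = s₀ * (ε * ‖v‖ ^ 2) := by rw [hs₀]; field_simp
          _ < s * (ε * ‖v‖ ^ 2) := by
              exact mul_lt_mul_of_pos_right hs.1 (by positivity)
          _ = ρ * ‖v‖ ^ 2 := by rw [hρdef]; ring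
      have hzcre : zc.re = -(s * ζ) := by
        rw [hzc, neg_div, Complex.neg_re, Complex.div_ofReal_re, hwsre]
        field_simp
      -- the affine disc map
      set A : ℂ → EuclideanSpace ℂ (Fin r) := fun z => lam s + z • vc with hA
      have hAm : ∀ z m, A z m = lam s m + z * (v m : ℂ) := by
        intro z m; rw [hA]; simp [hvc m]
      have hAre : ∀ z m, (A z m).re = η m + (s * ζ + z.re) * v m + s * u m := by
        intro z m
        rw [hAm z m, Complex.add_re, hlamre s m]
        rw [show (z * ((v m : ℝ) : ℂ)).re = z.re * v m by simp [Complex.mul_re]]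
        ring
      have hsuc : ∑ m, (s • u) m * v m = 0 := by
        have : ∀ m, (s • u) m = s * u m := fun m => rfl
        simp only [this, mul_assoc, ← Finset.mul_sum, hu0, mul_zero]
      have hsun : ‖s • u‖ = s * ‖u‖ := by
        rw [norm_smul, Real.norm_eq_abs, abs_of_pos hs0]
      -- membership of the closed disc in Ω, of the open disc in the interior
      have hAΩ : ∀ z ∈ Metric.closedBall zc ρ, A z ∈ Ω := by
        intro z hz
        refine hmemΩ (s * ζ + z.re) (s • u) (A z) ?_ hsuc ?_ (hAre z)
        · have h1 : |z.re - zc.re| ≤ ‖z - zc‖ := by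
            rw [← Complex.sub_re]; exact Complex.abs_re_le_norm _
          have h2 : ‖z - zc‖ ≤ ρ := by
            rw [← dist_eq_norm]; exact Metric.mem_closedBall.mp hz
          rw [hzcre] at h1
          have : |s * ζ + z.re| ≤ ρ := by
            rw [show s * ζ + z.re = z.re - -(s * ζ) by ring]
            exact le_trans h1 h2
          refine le_trans this ?_
          rw [hρdef]; nlinarith
        · rw [hsun]
          calc s * ‖u‖ ≤ 1 * ε := mul_le_mul hs1.le hun (norm_nonneg u) zero_le_one
            _ = ε := one_mul ε
      have hAint : ∀ z ∈ Metric.ball zc ρ, A z ∈ interior Ω := by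
        intro z hz
        refine hmemInt (s * ζ + z.re) (s • u) (A z) ?_ hsuc ?_ (hAre z)
        · have h1 : |z.re - zc.re| ≤ ‖z - zc‖ := by
            rw [← Complex.sub_re]; exact Complex.abs_re_le_norm _
          have h2 : ‖z - zc‖ < ρ := by
            rw [← dist_eq_norm]; exact Metric.mem_ball.mp hz
          rw [hzcre] at h1
          have : |s * ζ + z.re| < ρ := by
            rw [show s * ζ + z.re = z.re - -(s * ζ) by ring]
            exact lt_of_le_of_lt h1 h2
          refine lt_of_lt_of_le this ?_
          rw [hρdef]; nlinarith
        · rw [hsun]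
          calc s * ‖u‖ ≤ s * ε := mul_le_mul_of_nonneg_left hun hs0.le
            _ < 1 * ε := mul_lt_mul_of_pos_right hs1 hε
            _ = ε := one_mul ε
      -- differentiability of φ ∘ A
      have hAc : Continuous A := by
        rw [hA]
        exact continuous_const.add (continuous_id.smul continuous_const)
      have hAd : Differentiable ℂ A := by
        rw [hA]
        exact (differentiable_id.smul_const vc).const_add _
      have hdc : DiffContOnCl ℂ (fun z => φ (A z)) (Metric.ball zc ρ) := by
        constructor
        · exact (hφd.comp hAd.differentiableOn hAint : DifferentiableOn ℂ (φ ∘ A) _)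
        · rw [closure_ball zc (ne_of_gt hρ)]
          exact (hφc.comp hAc.continuousOn hAΩ : ContinuousOn (φ ∘ A) _)
      -- boundary estimate
      have hfr : ∀ z ∈ frontier (Metric.ball zc ρ), ‖φ (A z)‖ ≤ B s := by
        rw [frontier_ball zc (ne_of_gt hρ)]
        intro z hz
        have hzs : ‖z - zc‖ = ρ := by
          rw [← dist_eq_norm]; exact Metric.mem_sphere.mp hz
        have hzΩ : A z ∈ Ω :=
          hAΩ z (Metric.sphere_subset_closedBall hz)
        have hfac : (∑ m, A z m * (v m : ℂ)) - a = ((‖v‖ ^ 2 : ℝ) : ℂ) * (z - zc) := by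
          have h1 : ∑ m, A z m * (v m : ℂ)
              = (∑ m, lam s m * (v m : ℂ)) + z * ((‖v‖ ^ 2 : ℝ) : ℂ) := by
            have h2 : ∑ m, ((v m : ℝ) : ℂ) * ((v m : ℝ) : ℂ) = ((‖v‖ ^ 2 : ℝ) : ℂ) := by
              rw [← sumvv, Complex.ofReal_sum]
              exact Finset.sum_congr rfl fun m _ => by push_cast; ring
            rw [← h2, Finset.mul_sum, ← Finset.sum_add_distrib]
            refine Finset.sum_congr rfl fun m _ => ?_
            rw [hAm z m]; ring
          have hcan : ((‖v‖ ^ 2 : ℝ) : ℂ) * zc = -ws := by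
            rw [hzc, mul_comm, div_mul_cancel₀ _ hv2c]
          rw [h1, show (∑ m, lam s m * (v m : ℂ)) = ws + a by
            have := hlamsum s; rw [← hws] at this; linear_combination this]
          rw [mul_sub, hcan]
          ring
        have hnf : ‖(∑ m, A z m * (v m : ℂ)) - (a : ℂ)‖ = ‖v‖ ^ 2 * ρ := by
          rw [hfac, norm_mul, hzs]
          rw [Complex.norm_real, Real.norm_eq_abs, abs_of_pos hv2]
        have hb := hbound (A z) hzΩ
        rw [norm_mul, hnf] at hb
        have hzn : ‖z‖ ≤ 2 * ε := by
          calc ‖z‖ = ‖(z - zc) + zc‖ := by ring_nf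
            _ ≤ ‖z - zc‖ + ‖zc‖ := norm_add_le _ _
            _ ≤ ρ + ρ := by rw [hzs]; linarith [hzcn]
            _ ≤ 2 * ε := by rw [hρdef]; nlinarith
        have hAn : ‖A z‖ ≤ ‖lam s‖ + 2 * ε * ‖v‖ := by
          rw [hA]
          calc ‖lam s + z • vc‖ ≤ ‖lam s‖ + ‖z • vc‖ := norm_add_le _ _
            _ = ‖lam s‖ + ‖z‖ * ‖v‖ := by rw [norm_smul, hnvc]
            _ ≤ ‖lam s‖ + 2 * ε * ‖v‖ := by nlinarith [hzn, hvn]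
        have hb2 : ‖v‖ ^ 2 * ρ * ‖φ (A z)‖ ≤ C * (1 + 2 * ε * ‖v‖ + ‖lam s‖) ^ n := by
          refine le_trans hb ?_
          refine mul_le_mul_of_nonneg_left (pow_le_pow_left₀ (by positivity) ?_ n) hC.le
          linarith [hAn]
        rw [hB]
        calc ‖φ (A z)‖ = (‖v‖ ^ 2 * ρ)⁻¹ * (‖v‖ ^ 2 * ρ * ‖φ (A z)‖) := by
              field_simp
          _ ≤ (‖v‖ ^ 2 * ρ)⁻¹ * (C * (1 + 2 * ε * ‖v‖ + ‖lam s‖) ^ n) :=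
              mul_le_mul_of_nonneg_left hb2 (by positivity)
          _ = (s * ε)⁻¹ * (‖v‖ ^ 2)⁻¹ * C * (1 + 2 * ε * ‖v‖ + ‖lam s‖) ^ n := by
              rw [mul_inv, hρdef]; ring
      -- maximum modulus principle
      have h0 : (0 : ℂ) ∈ closure (Metric.ball zc ρ) := by
        rw [closure_ball zc (ne_of_gt hρ)]
        rw [Metric.mem_closedBall, dist_eq_norm, zero_sub, norm_neg]
        exact hzcn.le
      have := Complex.norm_le_of_forall_mem_frontier_norm_le Metric.isBounded_ball hdc hfr h0
      rw [show A 0 = lam s by rw [hA]; simp] at this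
      exact this
    -- take the limit s → 1⁻
    haveI hNB : (nhdsWithin (1:ℝ) (Set.Ioo s₀ 1)).NeBot := by
      apply mem_closure_iff_nhdsWithin_neBot.mp
      rw [closure_Ioo hs₀1.ne]
      exact Set.right_mem_Icc.mpr hs₀1.le
    have hlamcont : Continuous lam := by
      rw [hlam]
      exact continuous_const.sub
        ((Complex.continuous_ofReal.comp (continuous_const.sub continuous_id)).smul
          continuous_const)
    have hlam1 : lam 1 = l0 := by rw [hlam]; simp
    have hmemlam : ∀ s ∈ Set.Ioo s₀ 1, lam s ∈ Ω := by
      intro s hs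
      have hs0 : 0 < s := lt_of_le_of_lt hs₀0 hs.1
      refine hmemΩ (s * ζ) (s • u) (lam s) ?_ ?_ ?_ (hlamre s)
      · rw [abs_mul, abs_of_pos hs0]
        calc s * |ζ| ≤ 1 * ε := mul_le_mul hs.2.le hζabs (abs_nonneg ζ) zero_le_one
          _ = ε := one_mul ε
      · have : ∀ m, (s • u) m = s * u m := fun m => rfl
        simp only [this, mul_assoc, ← Finset.mul_sum, hu0, mul_zero]
      · rw [norm_smul, Real.norm_eq_abs, abs_of_pos hs0]
        calc s * ‖u‖ ≤ 1 * ε := mul_le_mul hs.2.le hun (norm_nonneg u) zero_le_one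
          _ = ε := one_mul ε
    have h1 : Filter.Tendsto lam (nhdsWithin 1 (Set.Ioo s₀ 1)) (nhdsWithin l0 Ω) := by
      apply tendsto_nhdsWithin_of_tendsto_nhds_of_eventually_within
      · exact hlam1 ▸ (hlamcont.tendsto 1).mono_left nhdsWithin_le_nhds
      · exact eventually_mem_nhdsWithin.mono hmemlam
    have hfT : Filter.Tendsto (fun s => ‖φ (lam s)‖) (nhdsWithin 1 (Set.Ioo s₀ 1))
        (nhds ‖φ l0‖) :=
      (continuous_norm.tendsto _).comp ((hφc l0 hl0).tendsto.comp h1)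
    have hBT : Filter.Tendsto B (nhdsWithin 1 (Set.Ioo s₀ 1))
        (nhds (ε⁻¹ * (‖v‖ ^ 2)⁻¹ * C * (1 + 2 * ε * ‖v‖ + ‖l0‖) ^ n)) := by
      have hnormT : Filter.Tendsto (fun s => ‖lam s‖) (nhdsWithin 1 (Set.Ioo s₀ 1))
          (nhds ‖l0‖) :=
        hlam1 ▸ ((continuous_norm.comp hlamcont).tendsto 1).mono_left nhdsWithin_le_nhds
      have hinvT : Filter.Tendsto (fun s : ℝ => (s * ε)⁻¹) (nhdsWithin 1 (Set.Ioo s₀ 1))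
          (nhds ((1 * ε))⁻¹) :=
        (((continuous_id.mul continuous_const).tendsto 1).mono_left nhdsWithin_le_nhds).inv₀
          (by simpa using hε.ne')
      have hmain := (hinvT.mul (tendsto_const_nhds (x := (‖v‖ ^ 2)⁻¹ * C))).mul
        (((tendsto_const_nhds (x := 1 + 2 * ε * ‖v‖)).add hnormT).pow n)
      have heq : B = fun s => ((s * ε)⁻¹ * ((‖v‖ ^ 2)⁻¹ * C))
          * ((1 + 2 * ε * ‖v‖ + ‖lam s‖) ^ n) := by
        funext s; rw [hB]; ring
      rw [heq, show ε⁻¹ * (‖v‖ ^ 2)⁻¹ * C * (1 + 2 * ε * ‖v‖ + ‖l0‖) ^ n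
        = ((1 * ε)⁻¹ * ((‖v‖ ^ 2)⁻¹ * C)) * ((1 + 2 * ε * ‖v‖ + ‖l0‖) ^ n) by ring]
      exact hmain
    exact le_of_tendsto_of_tendsto hfT hBT (eventually_mem_nhdsWithin.mono key)
end
end

section
/- Fix real numbers k_s, k_m, k_ℓ, set 𝛂 = k_s + k_ℓ − 1/2 and 𝛃 = k_ℓ − 1/2, and let 1 ≤ i ≤ r. Let (ξ_1,…,ξ_i) ∈ D_k(Θ_i), and let λ = (λ_1,…,λ_r) ∈ ℂ^r with λ_j = ξ_j for 1 ≤ j ≤ i, satisfying the genericity conditions: λ_j ∉ ℤ for all j, and (λ_p ± λ_q)/2 ∉ ℤ for all p ≠ q. Let w ∈ W and suppose that either w e_1 ∈ {−e_1,…,−e_r}, or there exists 1 ≤ j ≤ i−1 such that w(e_{j+1} − e_j) ∈ {e_q − e_p : 1 ≤ q < p ≤ r} ∪ {−e_p − e_q : 1 ≤ q < p ≤ r} (i.e. w does not map all simple roots of Θ_i to positive roots). Then c̃(wλ, k) = 0, where wλ denotes the image of λ under w. Under the genericity conditions all Gamma factors occurring in numerators of c̃(wλ,k) are finite, so the vanishing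 is genuine. -/
noncomputable section

/-- The `c̃`-function of type `BC_r` with multiplicities `(ks, km, kl)`; the
reciprocal Gamma factors are written as inverses (`Complex.Gamma` vanishes at
nonpositive integers, so `(Complex.Gamma z)⁻¹` is the entire reciprocal Gamma
function). -/
def ctilde (r : ℕ) (ks km kl : ℝ) (l : Fin r → ℂ) : ℂ :=
  (∏ p : Fin r, ∏ q : Fin r,
    if (q : ℕ) < (p : ℕ) then
      Complex.Gamma ((l p - l q) / 2) * Complex.Gamma ((l p + l q) / 2) *
        (Complex.Gamma ((l p - l q) / 2 + (km : ℂ)))⁻¹ *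
        (Complex.Gamma ((l p + l q) / 2 + (km : ℂ)))⁻¹
    else 1) *
  ∏ j : Fin r,
    (2 : ℂ) ^ (-(ks : ℂ)) * Complex.Gamma (l j / 2) * Complex.Gamma ((l j + 1) / 2) *
      (Complex.Gamma ((l j + (ks : ℂ) + 1) / 2))⁻¹ *
      (Complex.Gamma ((l j + (ks : ℂ) + 2 * (kl : ℂ)) / 2))⁻¹

/-- Action on `ℂ^r` of the element of the Weyl group of type `BC_r` given by the
sign vector `ε` and the permutation `σ`. -/
def wAct (r : ℕ) (ε : Fin r → ℤˣ) (σ : Equiv.Perm (Fin r)) (l : Fin r → ℂ) : Fin r → ℂ :=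
  fun j => ((ε j : ℤ) : ℂ) * l (σ⁻¹ j)

/-- The standard basis vector `e_m` of `ℂ^r`. -/
def eVec (r : ℕ) (m : Fin r) : Fin r → ℂ := fun j => if j = m then 1 else 0

lemma key_neg (u : ℤˣ) (b1 b2 : Prop) [Decidable b1] [Decidable b2]
    (h : ((u : ℤ) : ℂ) * ((if b1 then (1:ℂ) else 0) - (if b2 then 1 else 0)) = -1) :
    (b1 ∧ ¬b2 ∧ ((u : ℤ) : ℂ) = -1) ∨ (b2 ∧ ¬b1 ∧ ((u : ℤ) : ℂ) = 1) := by
  rcases Int.units_eq_one_or u with h1 | h1 <;> rw [h1] at h ⊢ <;>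
    by_cases hb1 : b1 <;> by_cases hb2 : b2 <;>
    simp [hb1, hb2] at h ⊢ <;> norm_num at h

lemma key_pos (u : ℤˣ) (b1 b2 : Prop) [Decidable b1] [Decidable b2]
    (h : ((u : ℤ) : ℂ) * ((if b1 then (1:ℂ) else 0) - (if b2 then 1 else 0)) = 1) :
    (b1 ∧ ¬b2 ∧ ((u : ℤ) : ℂ) = 1) ∨ (b2 ∧ ¬b1 ∧ ((u : ℤ) : ℂ) = -1) := by
  rcases Int.units_eq_one_or u with h1 | h1 <;> rw [h1] at h ⊢ <;>
    by_cases hb1 : b1 <;> by_cases hb2 : b2 <;>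
    simp [hb1, hb2] at h ⊢ <;> norm_num at h

theorem stmt2 (r : ℕ) (ks km kl α β : ℝ) (hα : α = ks + kl - 1 / 2) (hβ : β = kl - 1 / 2)
    (i : ℕ) (hi : 1 ≤ i) (hir : i ≤ r)
    (ξ : ℕ → ℝ)
    -- `(ξ_1, …, ξ_i) ∈ D_k(Θ_i)`, with 0-based indices:
    (hd1 : ∃ n : ℕ, ξ 0 + |β| - α - 1 = 2 * (n : ℝ))
    (hd2 : ξ (i - 1) < 0)
    (hd3 : ∀ j : ℕ, j + 1 < i → ∃ n : ℕ, ξ (j + 1) - ξ j - 2 * km = 2 * (n : ℝ))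
    (l : Fin r → ℂ)
    (hlξ : ∀ j : Fin r, (j : ℕ) < i → l j = ((ξ (j : ℕ) : ℝ) : ℂ))
    -- genericity:
    (hgen1 : ∀ j : Fin r, ∀ n : ℤ, l j ≠ (n : ℂ))
    (hgen2 : ∀ p q : Fin r, p ≠ q → ∀ n : ℤ,
      (l p + l q) / 2 ≠ (n : ℂ) ∧ (l p - l q) / 2 ≠ (n : ℂ))
    (ε : Fin r → ℤˣ) (σ : Equiv.Perm (Fin r))
    -- `w` does not map all simple roots of `Θ_i` to positive roots:
    (hw : (∃ p : Fin r, wAct r ε σ (eVec r ⟨0, by omega⟩) = -eVec r p) ∨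
      (∃ j : ℕ, ∃ h : j + 1 < i,
        ∃ p q : Fin r, (q : ℕ) < (p : ℕ) ∧
          (wAct r ε σ (eVec r ⟨j + 1, by omega⟩ - eVec r ⟨j, by omega⟩) = eVec r q - eVec r p ∨
           wAct r ε σ (eVec r ⟨j + 1, by omega⟩ - eVec r ⟨j, by omega⟩) =
             -eVec r p - eVec r q))) :
    ctilde r ks km kl (wAct r ε σ l) = 0 := by
  classical
  set L := wAct r ε σ l with hLdef
  obtain ⟨p, hp⟩ | ⟨j, hji, p, q, hqp, hcase⟩ := hw
  · -- Case 1 : w e_1 = -e_p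
    set J0 : Fin r := ⟨0, by omega⟩ with hJ0
    have h := congrFun hp p
    simp only [wAct, eVec, Pi.neg_apply, if_pos rfl] at h
    have h' : ((ε p : ℤ) : ℂ) * ((if σ⁻¹ p = J0 then (1:ℂ) else 0) - (if False then 1 else 0)) = -1 := by
      simpa using h
    rcases key_neg _ _ _ h' with ⟨hσp, -, hεp⟩ | ⟨hf, -, -⟩
    swap
    · exact absurd hf not_false
    have hl0 : l J0 = ((ξ 0 : ℝ) : ℂ) := hlξ J0 (by rw [show (J0:ℕ) = 0 from rfl]; omega)
    have hLp : L p = -((ξ 0 : ℝ) : ℂ) := by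
      show ((ε p : ℤ) : ℂ) * l (σ⁻¹ p) = _
      rw [hσp, hεp, hl0]; ring
    obtain ⟨n, hn⟩ := hd1
    simp only [ctilde]
    apply mul_eq_zero_of_right
    apply Finset.prod_eq_zero (Finset.mem_univ p)
    rcases abs_cases β with ⟨habs, hb⟩ | ⟨habs, hb⟩
    · -- β ≥ 0 : factor Γ((λ+ks+1)/2)⁻¹ vanishes
      have hx : ξ 0 = 2 * n + ks + 1 := by
        rw [habs, hβ, hα] at hn; linarith
      have harg : (L p + (ks : ℂ) + 1) / 2 = -(n : ℂ) := by
        rw [hLp, hx]; push_cast; ring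
      rw [harg, Complex.Gamma_neg_nat_eq_zero, inv_zero, mul_zero, zero_mul]
    · -- β < 0 : factor Γ((λ+ks+2kl)/2)⁻¹ vanishes
      have hx : ξ 0 = 2 * n + ks + 2 * kl := by
        rw [habs, hβ, hα] at hn; linarith
      have harg : (L p + (ks : ℂ) + 2 * (kl : ℂ)) / 2 = -(n : ℂ) := by
        rw [hLp, hx]; push_cast; ring
      rw [harg, Complex.Gamma_neg_nat_eq_zero, inv_zero, mul_zero]
  · -- Case 2 : w(e_{j+1} - e_j) is a negative root
    set J : Fin r := ⟨j, by omega⟩ with hJ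
    set J1 : Fin r := ⟨j + 1, by omega⟩ with hJ1
    have hJne : J1 ≠ J := by
      simp [hJ, hJ1, Fin.ext_iff]
    have hpq : p ≠ q := by
      intro h; rw [h] at hqp; omega
    have hl0 : l J = ((ξ j : ℝ) : ℂ) := hlξ J (by rw [show (J:ℕ) = j from rfl]; omega)
    have hl1 : l J1 = ((ξ (j + 1) : ℝ) : ℂ) :=
      hlξ J1 (by rw [show (J1:ℕ) = j + 1 from rfl]; omega)
    obtain ⟨n, hn⟩ := hd3 j hji
    have hinj : σ⁻¹ p ≠ σ⁻¹ q := fun h => hpq (σ⁻¹.injective h)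
    -- From each subcase, derive the vanishing of one Γ-inverse factor.
    have hzero : (Complex.Gamma ((L p - L q) / 2 + (km : ℂ)))⁻¹ = 0 ∨
        (Complex.Gamma ((L p + L q) / 2 + (km : ℂ)))⁻¹ = 0 := by
      have harg : ∀ z : ℂ, z = ((ξ j : ℝ) : ℂ) - ((ξ (j+1) : ℝ) : ℂ) →
          z / 2 + (km : ℂ) = -(n : ℂ) := by
        intro z hz
        rw [hz]
        have hx : ξ j = ξ (j + 1) - 2 * km - 2 * n := by linarith
        rw [hx]; push_cast; ring
      rcases hcase with hc | hc
      · -- w(e_{j+1}-e_j) = e_q - e_p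
        left
        have hP := congrFun hc p
        have hQ := congrFun hc q
        simp only [wAct, eVec, Pi.sub_apply, if_pos rfl, if_neg hpq, if_neg hpq.symm] at hP hQ
        have hP' : ((ε p : ℤ) : ℂ) *
            ((if σ⁻¹ p = J1 then (1:ℂ) else 0) - (if σ⁻¹ p = J then 1 else 0)) = -1 := by
          simpa using hP
        have hQ' : ((ε q : ℤ) : ℂ) *
            ((if σ⁻¹ q = J1 then (1:ℂ) else 0) - (if σ⁻¹ q = J then 1 else 0)) = 1 := by
          simpa using hQ
        have hdiff : L p - L q = ((ξ j : ℝ) : ℂ) - ((ξ (j+1) : ℝ) : ℂ) := by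
          rcases key_neg _ _ _ hP' with ⟨hσ1, -, hε1⟩ | ⟨hσ1, -, hε1⟩ <;>
            rcases key_pos _ _ _ hQ' with ⟨hσ2, -, hε2⟩ | ⟨hσ2, -, hε2⟩
          · exact absurd (hσ1.trans hσ2.symm) hinj
          · show ((ε p : ℤ) : ℂ) * l (σ⁻¹ p) - ((ε q : ℤ) : ℂ) * l (σ⁻¹ q) = _
            rw [hσ1, hσ2, hε1, hε2, hl0, hl1]; ring
          · show ((ε p : ℤ) : ℂ) * l (σ⁻¹ p) - ((ε q : ℤ) : ℂ) * l (σ⁻¹ q) = _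
            rw [hσ1, hσ2, hε1, hε2, hl0, hl1]; ring
          · exact absurd (hσ1.trans hσ2.symm) hinj
        rw [harg _ hdiff, Complex.Gamma_neg_nat_eq_zero, inv_zero]
      · -- w(e_{j+1}-e_j) = -e_p - e_q
        right
        have hP := congrFun hc p
        have hQ := congrFun hc q
        simp only [wAct, eVec, Pi.sub_apply, Pi.neg_apply, if_pos rfl,
          if_neg hpq, if_neg hpq.symm] at hP hQ
        have hP' : ((ε p : ℤ) : ℂ) *
            ((if σ⁻¹ p = J1 then (1:ℂ) else 0) - (if σ⁻¹ p = J then 1 else 0)) = -1 := by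
          simpa using hP
        have hQ' : ((ε q : ℤ) : ℂ) *
            ((if σ⁻¹ q = J1 then (1:ℂ) else 0) - (if σ⁻¹ q = J then 1 else 0)) = -1 := by
          simpa using hQ
        have hsum : L p + L q = ((ξ j : ℝ) : ℂ) - ((ξ (j+1) : ℝ) : ℂ) := by
          rcases key_neg _ _ _ hP' with ⟨hσ1, -, hε1⟩ | ⟨hσ1, -, hε1⟩ <;>
            rcases key_neg _ _ _ hQ' with ⟨hσ2, -, hε2⟩ | ⟨hσ2, -, hε2⟩
          · exact absurd (hσ1.trans hσ2.symm) hinj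
          · show ((ε p : ℤ) : ℂ) * l (σ⁻¹ p) + ((ε q : ℤ) : ℂ) * l (σ⁻¹ q) = _
            rw [hσ1, hσ2, hε1, hε2, hl0, hl1]; ring
          · show ((ε p : ℤ) : ℂ) * l (σ⁻¹ p) + ((ε q : ℤ) : ℂ) * l (σ⁻¹ q) = _
            rw [hσ1, hσ2, hε1, hε2, hl0, hl1]; ring
          · exact absurd (hσ1.trans hσ2.symm) hinj
        rw [harg _ hsum, Complex.Gamma_neg_nat_eq_zero, inv_zero]
    simp only [ctilde]
    apply mul_eq_zero_of_left
    apply Finset.prod_eq_zero (Finset.mem_univ p)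
    apply Finset.prod_eq_zero (Finset.mem_univ q)
    rw [if_pos hqp]
    rcases hzero with hz | hz <;> rw [hz] <;> ring
end
end

section
/- Let k_m ∈ ℝ and let z, w ∈ ℂ be such that for all sign choices ε₁, ε₂ ∈ {±1}: (ε₁z + ε₂w)/2 ∉ ℤ and (ε₁z + ε₂w)/2 + k_m ∉ ℤ. Then ∏_{ε₁,ε₂ ∈ {±1}} Γ((ε₁z+ε₂w)/2 + k_m) / Γ((ε₁z+ε₂w)/2) = −(sin(π(z+w)/2) · sin(π(z−w)/2)) / (sin(π(z+w+2k_m)/2) · sin(π(−z+w+2k_m)/2)) · q(z,w), where q(z,w) = (w²−z²) · Γ((z−w)/2+k_m) Γ((−z−w)/2+k_m) / (4 · Γ((z−w)/2−k_m+1) Γ((−z−w)/2−k_m+1)). -/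
noncomputable section

open Complex

lemma key_refl (k a : ℂ) (ha : ∀ n : ℤ, a ≠ (n : ℂ)) (hak : ∀ n : ℤ, a + k ≠ (n : ℂ)) :
    Complex.Gamma (a + k) / Complex.Gamma a * (Complex.Gamma (-a + k) / Complex.Gamma (-a)) =
    -a * Complex.sin ((Real.pi : ℂ) * a) / Complex.sin ((Real.pi : ℂ) * (a + k)) *
      (Complex.Gamma (-a + k) / Complex.Gamma (-a - k + 1)) := by
  have hπ : (Real.pi : ℂ) ≠ 0 := by
    exact_mod_cast Real.pi_ne_zero
  have hsa : Complex.sin ((Real.pi : ℂ) * a) ≠ 0 := by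
    rw [Complex.sin_ne_zero_iff]
    intro n hn
    exact ha n (mul_left_cancel₀ hπ (by rw [hn]; ring))
  have hsak : Complex.sin ((Real.pi : ℂ) * (a + k)) ≠ 0 := by
    rw [Complex.sin_ne_zero_iff]
    intro n hn
    exact hak n (mul_left_cancel₀ hπ (by rw [hn]; ring))
  have hGa : Complex.Gamma a ≠ 0 := by
    refine Complex.Gamma_ne_zero fun m => ?_
    have := ha (-(m : ℤ))
    push_cast at this ⊢
    exact this
  have hGna : Complex.Gamma (-a) ≠ 0 := by
    refine Complex.Gamma_ne_zero fun m => ?_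
    have := ha (m : ℤ)
    push_cast at this ⊢
    intro hc
    exact this (by linear_combination -hc)
  have hGd : Complex.Gamma (-a - k + 1) ≠ 0 := by
    refine Complex.Gamma_ne_zero fun m => ?_
    have := hak ((m : ℤ) + 1)
    push_cast at this ⊢
    intro hc
    exact this (by linear_combination -hc)
  have hna : -a ≠ 0 := by
    intro hc
    exact ha 0 (by simpa using neg_eq_zero.mp hc)
  have e1 := Complex.Gamma_mul_Gamma_one_sub a
  have e2 := Complex.Gamma_mul_Gamma_one_sub (a + k)
  have e3 : Complex.Gamma (1 - a) = -a * Complex.Gamma (-a) := by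
    rw [show (1 : ℂ) - a = -a + 1 by ring, Complex.Gamma_add_one _ hna]
  rw [e3] at e1
  rw [show (1 : ℂ) - (a + k) = -a - k + 1 by ring] at e2
  have hsa' : Complex.sin (a * (Real.pi : ℂ)) ≠ 0 := by rwa [mul_comm]
  field_simp at e1 e2 ⊢
  linear_combination Complex.Gamma (-a + k) * e2 - Complex.Gamma (-a + k) * e1

lemma sin_ne (a : ℂ) (ha : ∀ n : ℤ, a ≠ (n : ℂ)) :
    Complex.sin ((Real.pi : ℂ) * a) ≠ 0 := by
  have hπ : (Real.pi : ℂ) ≠ 0 := by exact_mod_cast Real.pi_ne_zero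
  rw [Complex.sin_ne_zero_iff]
  intro n hn
  exact ha n (mul_left_cancel₀ hπ (by rw [hn]; ring))

lemma Gamma_ne (a : ℂ) (ha : ∀ n : ℤ, a ≠ (n : ℂ)) : Complex.Gamma a ≠ 0 := by
  refine Complex.Gamma_ne_zero fun m => ?_
  have := ha (-(m : ℤ))
  push_cast at this ⊢
  exact this

lemma alg (u v a b c d A B E F x : ℂ) (hx : x = -(4 * u * v))
    (hc : c ≠ 0) (hd : d ≠ 0) (hE : E ≠ 0) (hF : F ≠ 0) :
    -u * a / c * (A / E) * (v * b / d * (B / F)) =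
      -(a * -b) / (c * d) * (x * B * A / (4 * F * E)) := by
  subst hx
  field_simp

theorem stmt4 (km : ℝ) (z w : ℂ)
    (h : ∀ s₁ s₂ : ℂ, (s₁ = 1 ∨ s₁ = -1) → (s₂ = 1 ∨ s₂ = -1) →
      (∀ n : ℤ, (s₁ * z + s₂ * w) / 2 ≠ (n : ℂ)) ∧
      (∀ n : ℤ, (s₁ * z + s₂ * w) / 2 + (km : ℂ) ≠ (n : ℂ))) :
    (Complex.Gamma ((z + w) / 2 + (km : ℂ)) / Complex.Gamma ((z + w) / 2)) *
      (Complex.Gamma ((z - w) / 2 + (km : ℂ)) / Complex.Gamma ((z - w) / 2)) *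
      (Complex.Gamma ((-z + w) / 2 + (km : ℂ)) / Complex.Gamma ((-z + w) / 2)) *
      (Complex.Gamma ((-z - w) / 2 + (km : ℂ)) / Complex.Gamma ((-z - w) / 2)) =
    -(Complex.sin ((Real.pi : ℂ) * (z + w) / 2) * Complex.sin ((Real.pi : ℂ) * (z - w) / 2)) /
        (Complex.sin ((Real.pi : ℂ) * (z + w + 2 * (km : ℂ)) / 2) *
          Complex.sin ((Real.pi : ℂ) * (-z + w + 2 * (km : ℂ)) / 2)) *
      ((w ^ 2 - z ^ 2) * Complex.Gamma ((z - w) / 2 + (km : ℂ)) *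
          Complex.Gamma ((-z - w) / 2 + (km : ℂ)) /
        (4 * Complex.Gamma ((z - w) / 2 - (km : ℂ) + 1) *
          Complex.Gamma ((-z - w) / 2 - (km : ℂ) + 1))) := by
  obtain ⟨h1, h1k⟩ := h 1 1 (Or.inl rfl) (Or.inl rfl)
  obtain ⟨h2, h2k⟩ := h (-1) 1 (Or.inr rfl) (Or.inl rfl)
  simp only [one_mul, neg_one_mul, neg_mul] at h1 h1k h2 h2k
  have h1' : ∀ n : ℤ, (z + w) / 2 ≠ (n : ℂ) := h1
  have h2' : ∀ n : ℤ, -((z - w) / 2) ≠ (n : ℂ) := by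
    intro n hc; exact h2 n (by rw [← hc]; ring)
  have h1k' : ∀ n : ℤ, (z + w) / 2 + (km : ℂ) ≠ (n : ℂ) := h1k
  have h2k' : ∀ n : ℤ, -((z - w) / 2) + (km : ℂ) ≠ (n : ℂ) := by
    intro n hc; exact h2k n (by rw [← hc]; ring)
  have key1 := key_refl (km : ℂ) ((z + w) / 2) h1' h1k'
  have key2 := key_refl (km : ℂ) (-((z - w) / 2)) h2' h2k'
  rw [neg_neg] at key2
  -- nonvanishing facts for the final algebraic step
  have hs1 : Complex.sin ((Real.pi : ℂ) * ((z + w) / 2 + (km : ℂ))) ≠ 0 := sin_ne _ h1k'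
  have hs2 : Complex.sin ((Real.pi : ℂ) * (-((z - w) / 2) + (km : ℂ))) ≠ 0 := sin_ne _ h2k'
  have hG1 : Complex.Gamma (-((z + w) / 2) - (km : ℂ) + 1) ≠ 0 := by
    refine Gamma_ne _ fun n hc => ?_
    refine h1k' (1 - n) ?_
    push_cast
    linear_combination -hc
  have hG2 : Complex.Gamma ((z - w) / 2 - (km : ℂ) + 1) ≠ 0 := by
    refine Gamma_ne _ fun n hc => ?_
    refine h2k' (1 - n) ?_
    push_cast
    linear_combination -hc
  rw [show (-z - w) / 2 = -((z + w) / 2) from by ring,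
    show (-z + w) / 2 = -((z - w) / 2) from by ring,
    show (Real.pi : ℂ) * (z + w) / 2 = (Real.pi : ℂ) * ((z + w) / 2) from by ring,
    show (Real.pi : ℂ) * (z + w + 2 * (km : ℂ)) / 2
        = (Real.pi : ℂ) * ((z + w) / 2 + (km : ℂ)) from by ring,
    show (Real.pi : ℂ) * (-z + w + 2 * (km : ℂ)) / 2
        = (Real.pi : ℂ) * (-((z - w) / 2) + (km : ℂ)) from by ring,
    show (Real.pi : ℂ) * (z - w) / 2 = -((Real.pi : ℂ) * (-((z - w) / 2))) from by ring,
    Complex.sin_neg]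
  calc Complex.Gamma ((z + w) / 2 + (km : ℂ)) / Complex.Gamma ((z + w) / 2) *
      (Complex.Gamma ((z - w) / 2 + (km : ℂ)) / Complex.Gamma ((z - w) / 2)) *
      (Complex.Gamma (-((z - w) / 2) + (km : ℂ)) / Complex.Gamma (-((z - w) / 2))) *
      (Complex.Gamma (-((z + w) / 2) + (km : ℂ)) / Complex.Gamma (-((z + w) / 2)))
      = (Complex.Gamma ((z + w) / 2 + (km : ℂ)) / Complex.Gamma ((z + w) / 2) *
        (Complex.Gamma (-((z + w) / 2) + (km : ℂ)) / Complex.Gamma (-((z + w) / 2)))) *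
        (Complex.Gamma (-((z - w) / 2) + (km : ℂ)) / Complex.Gamma (-((z - w) / 2)) *
        (Complex.Gamma ((z - w) / 2 + (km : ℂ)) / Complex.Gamma ((z - w) / 2))) := by ring
    _ = _ := by
      rw [key1, key2]
      exact alg ((z + w) / 2) ((z - w) / 2) _ _ _ _ _ _ _ _ (w ^ 2 - z ^ 2)
        (by ring) hs1 hs2 hG1 hG2
end
end

section
/- Fix real k_s, k_m, k_ℓ with 𝛂 := k_s + k_ℓ − 1/2 > −1 and k_m > 0; set 𝛃 = k_ℓ − 1/2. Let 1 ≤ i ≤ r and ξ = (ξ_1,…,ξ_i) ∈ D_k(Θ_i). Then every Gamma argument occurring in the following expression is a strictly positive real number, and the real number ∏_{j=1}^i (−2^{2𝛂−2𝛃−1} ξ_j / π) · Γ((ξ_j+𝛂+|𝛃|+1)/2) Γ((−ξ_j+𝛂+|𝛃|+1)/2) / (Γ((ξ_j−𝛂+|𝛃|+1)/2) Γ((−ξ_j−𝛂+|𝛃|+1)/2)) · ∏_{1≤q<p≤i} ((ξ_q²−ξ_p²)/4) · Γ((ξ_p−ξ_q)/2+k_m) Γ((−ξ_p−ξ_q)/2+k_m)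 / (Γ((ξ_p−ξ_q)/2−k_m+1) Γ((−ξ_p−ξ_q)/2−k_m+1)) is strictly positive. -/
noncomputable section

theorem stmt7 (ks km kl α β : ℝ) (hα : α = ks + kl - 1 / 2) (hβ : β = kl - 1 / 2)
    (hα1 : -1 < α) (hkm : 0 < km)
    (r i : ℕ) (hi : 1 ≤ i) (hir : i ≤ r)
    (ξ : ℕ → ℝ)
    (hd1 : ∃ n : ℕ, ξ 0 + |β| - α - 1 = 2 * (n : ℝ))
    (hd2 : ξ (i - 1) < 0)
    (hd3 : ∀ j : ℕ, j + 1 < i → ∃ n : ℕ, ξ (j + 1) - ξ j - 2 * km = 2 * (n : ℝ)) :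
    (∀ j : ℕ, j < i →
      0 < (ξ j + α + |β| + 1) / 2 ∧ 0 < (-ξ j + α + |β| + 1) / 2 ∧
      0 < (ξ j - α + |β| + 1) / 2 ∧ 0 < (-ξ j - α + |β| + 1) / 2) ∧
    (∀ q p : ℕ, q < p → p < i →
      0 < (ξ p - ξ q) / 2 + km ∧ 0 < (-ξ p - ξ q) / 2 + km ∧
      0 < (ξ p - ξ q) / 2 - km + 1 ∧ 0 < (-ξ p - ξ q) / 2 - km + 1) ∧
    0 < (∏ j ∈ Finset.range i,
        (-(2 : ℝ) ^ (2 * α - 2 * β - 1) * ξ j / Real.pi) *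
          (Real.Gamma ((ξ j + α + |β| + 1) / 2) * Real.Gamma ((-ξ j + α + |β| + 1) / 2) /
            (Real.Gamma ((ξ j - α + |β| + 1) / 2) * Real.Gamma ((-ξ j - α + |β| + 1) / 2)))) *
      ∏ p ∈ Finset.range i, ∏ q ∈ Finset.range i,
        if q < p then
          ((ξ q ^ 2 - ξ p ^ 2) / 4) *
            (Real.Gamma ((ξ p - ξ q) / 2 + km) * Real.Gamma ((-ξ p - ξ q) / 2 + km) /
              (Real.Gamma ((ξ p - ξ q) / 2 - km + 1) * Real.Gamma ((-ξ p - ξ q) / 2 - km + 1)))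
        else 1 := by

  -- basic facts
  obtain ⟨n0, hn0⟩ := hd1
  have hξ0 : α + 1 - |β| ≤ ξ 0 := by
    have : (0:ℝ) ≤ (n0:ℝ) := Nat.cast_nonneg n0
    linarith
  have step : ∀ j : ℕ, j + 1 < i → ξ j + 2 * km ≤ ξ (j + 1) := by
    intro j hj
    obtain ⟨n, hn⟩ := hd3 j hj
    have : (0:ℝ) ≤ (n:ℝ) := Nat.cast_nonneg n
    linarith
  have key : ∀ b : ℕ, b < i → ∀ a : ℕ, a < b → ξ a + 2 * km ≤ ξ b := by
    intro b
    induction b with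
    | zero => intro _ a ha; omega
    | succ b ih =>
      intro hb a ha
      have hstep := step b hb
      rcases Nat.lt_succ_iff_lt_or_eq.mp ha with h | h
      · have := ih (by omega) a h
        linarith
      · subst h; exact hstep
  have hneg : ∀ j : ℕ, j < i → ξ j < 0 := by
    intro j hj
    rcases eq_or_lt_of_le (Nat.le_sub_one_of_lt hj) with h | h
    · rw [h]; exact hd2
    · have := key (i - 1) (by omega) j h
      linarith
  have h0le : ∀ j : ℕ, j < i → ξ 0 ≤ ξ j := by
    intro j hj
    rcases Nat.eq_zero_or_pos j with h | h
    · rw [h]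
    · have := key j hj 0 h; linarith
  have habs : (0:ℝ) ≤ |β| := abs_nonneg β
  have hfirst : ∀ j : ℕ, j < i →
      0 < (ξ j + α + |β| + 1) / 2 ∧ 0 < (-ξ j + α + |β| + 1) / 2 ∧
      0 < (ξ j - α + |β| + 1) / 2 ∧ 0 < (-ξ j - α + |β| + 1) / 2 := by
    intro j hj
    have h1 := h0le j hj
    have h2 := hneg j hj
    refine ⟨by linarith, by linarith, by linarith, by linarith⟩
  have hsecond : ∀ q p : ℕ, q < p → p < i →
      0 < (ξ p - ξ q) / 2 + km ∧ 0 < (-ξ p - ξ q) / 2 + km ∧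
      0 < (ξ p - ξ q) / 2 - km + 1 ∧ 0 < (-ξ p - ξ q) / 2 - km + 1 := by
    intro q p hqp hpi
    have h1 := key p hpi q hqp
    have h2 := hneg p hpi
    have h3 := hneg q (lt_trans hqp hpi)
    refine ⟨by linarith, by linarith, by linarith, by linarith⟩
  refine ⟨hfirst, hsecond, ?_⟩
  apply mul_pos
  · apply Finset.prod_pos
    intro j hj
    have hj' := Finset.mem_range.mp hj
    obtain ⟨g1, g2, g3, g4⟩ := hfirst j hj'
    apply mul_pos
    · apply div_pos _ Real.pi_pos
      exact mul_pos_of_neg_of_neg (neg_neg_of_pos (by positivity)) (hneg j hj')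
    · exact div_pos (mul_pos (Real.Gamma_pos_of_pos g1) (Real.Gamma_pos_of_pos g2))
        (mul_pos (Real.Gamma_pos_of_pos g3) (Real.Gamma_pos_of_pos g4))
  · apply Finset.prod_pos
    intro p hp
    have hp' := Finset.mem_range.mp hp
    apply Finset.prod_pos
    intro q hq
    have hq' := Finset.mem_range.mp hq
    by_cases hqp : q < p
    · rw [if_pos hqp]
      obtain ⟨g1, g2, g3, g4⟩ := hsecond q p hqp hp'
      apply mul_pos
      · have h1 := key p hp' q hqp
        have h2 := hneg p hp'
        have hprod := mul_pos (show (0:ℝ) < ξ p - ξ q by linarith)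
          (show (0:ℝ) < -ξ p - ξ q by linarith)
        nlinarith
      · exact div_pos (mul_pos (Real.Gamma_pos_of_pos g1) (Real.Gamma_pos_of_pos g2))
          (mul_pos (Real.Gamma_pos_of_pos g3) (Real.Gamma_pos_of_pos g4))
    · rw [if_neg hqp]; exact one_pos
end
end
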